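/- arXiv:2409.09104 — 4 statements merged into one kernel-verified Lean document; each statement's English description precedes it below -/
import Mathlib

section
/- Let n, k, p be positive integers, let Q₁ ∈ ℝ^{n×k} and Q₂ ∈ ℝ^{n×(k+1)} have orthonormal columns (Q₁ᵀQ₁ = I_k, Q₂ᵀQ₂ = I_{k+1}), let M ∈ ℝ^{(k+1)×k} be such that MᵀM is invertible, let c ∈ ℝⁿ, and let L ∈ ℝ^{p×n}. Set B = Q₂ M Q₁ᵀ, x_k = Q₁ (MᵀM)⁻¹ Mᵀ Q₂ᵀ c, and P = I_n − Q₁Q₁ᵀ. Suppose z ∈ ℝⁿ satisfies: (i) ‖L P z − L x_k‖ ≤ ‖L P w − L x_k‖ for all w ∈ ℝⁿ (z is a least squares solution of min_w ‖(LP)w − Lx_k‖), and (ii) z lies in the column space of (LP)ᵀ. Then x_{L,k} := x_k − z satisfies: (a) ‖B x_{L,k} − c‖ ≤ ‖B x − c‖ for all x ∈ ℝⁿ, and (b) for every x ∈ ℝⁿ with ‖B x − c‖ ≤ ‖B w − c‖ for all w ∈ ℝⁿ, one has ‖L x_{L,k}‖ ≤ ‖L x‖. That is, x_{L,k} = x_k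 − (L(I_n − Q₁Q₁ᵀ))† L x_k solves min ‖Lx‖ subject to x being a least squares solution of ‖Bx − c‖. -/
open Matrix

/-- Euclidean 2-norm of a vector in `ℝ^d`. -/
noncomputable def enorm₂ {d : ℕ} (v : Fin d → ℝ) : ℝ := Real.sqrt (∑ i, v i ^ 2)


lemma enorm0 {d : ℕ} (v : Fin d → ℝ) : enorm₂ v = Real.sqrt (v ⬝ᵥ v) := by
  simp [enorm₂, dotProduct, sq]

lemma dot_self_nonneg {d : ℕ} (v : Fin d → ℝ) : 0 ≤ v ⬝ᵥ v :=
  Finset.sum_nonneg fun i _ => mul_self_nonneg _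

lemma enorm_le_of_dot {d : ℕ} {u v : Fin d → ℝ} (h : u ⬝ᵥ u ≤ v ⬝ᵥ v) :
    enorm₂ u ≤ enorm₂ v := by
  rw [enorm0, enorm0]; exact Real.sqrt_le_sqrt h

lemma dot_le_of_enorm {d : ℕ} {u v : Fin d → ℝ} (h : enorm₂ u ≤ enorm₂ v) :
    u ⬝ᵥ u ≤ v ⬝ᵥ v := by
  rw [enorm0, enorm0] at h
  calc u ⬝ᵥ u = Real.sqrt (u ⬝ᵥ u) ^ 2 := (Real.sq_sqrt (dot_self_nonneg u)).symm
    _ ≤ Real.sqrt (v ⬝ᵥ v) ^ 2 := by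
        have := Real.sqrt_nonneg (u ⬝ᵥ u); nlinarith [Real.sqrt_nonneg (v ⬝ᵥ v)]
    _ = v ⬝ᵥ v := Real.sq_sqrt (dot_self_nonneg v)

/-- Pythagoras-style inequality: if `d ⬝ᵥ r = 0` then `‖r‖ ≤ ‖r + d‖`. -/
lemma pyth {m : ℕ} {r d : Fin m → ℝ} (h : d ⬝ᵥ r = 0) : enorm₂ r ≤ enorm₂ (r + d) := by
  apply enorm_le_of_dot
  have expand : (r + d) ⬝ᵥ (r + d) = r ⬝ᵥ r + 2 * (d ⬝ᵥ r) + d ⬝ᵥ d := by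
    simp [dotProduct_add, add_dotProduct, dotProduct_comm d r]; ring
  have := dot_self_nonneg d
  rw [expand, h]; linarith

/-- Normal equations imply least squares. -/
lemma ls_of_normal {m d : ℕ} (A : Matrix (Fin m) (Fin d) ℝ) (b : Fin m → ℝ)
    (x : Fin d → ℝ) (h : Aᵀ *ᵥ (A *ᵥ x - b) = 0) (y : Fin d → ℝ) :
    enorm₂ (A *ᵥ x - b) ≤ enorm₂ (A *ᵥ y - b) := by
  have hy : A *ᵥ y - b = (A *ᵥ x - b) + A *ᵥ (y - x) := by
    rw [mulVec_sub]; abel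
  rw [hy]
  apply pyth
  rw [dotProduct_comm, dotProduct_mulVec (A *ᵥ x - b) A (y - x),
    ← mulVec_transpose, h, zero_dotProduct]

/-- Least squares implies normal equations. -/
lemma normal_of_ls {m d : ℕ} (A : Matrix (Fin m) (Fin d) ℝ) (b : Fin m → ℝ)
    (x : Fin d → ℝ) (h : ∀ y, enorm₂ (A *ᵥ x - b) ≤ enorm₂ (A *ᵥ y - b)) :
    Aᵀ *ᵥ (A *ᵥ x - b) = 0 := by
  set r := A *ᵥ x - b with hr
  have key : ∀ w : Fin d → ℝ, (A *ᵥ w) ⬝ᵥ r = 0 := by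
    intro w
    set a := (A *ᵥ w) ⬝ᵥ r with ha
    set bb := (A *ᵥ w) ⬝ᵥ (A *ᵥ w) with hbb
    have hbb0 : 0 ≤ bb := dot_self_nonneg _
    have key2 : ∀ t : ℝ, 0 ≤ 2 * t * a + t ^ 2 * bb := by
      intro t
      have h1 := dot_le_of_enorm (h (x + t • w))
      have hexp : A *ᵥ (x + t • w) - b = r + t • (A *ᵥ w) := by
        rw [hr, mulVec_add, mulVec_smul]; abel
      rw [hexp] at h1
      have expand : (r + t • (A *ᵥ w)) ⬝ᵥ (r + t • (A *ᵥ w))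
          = r ⬝ᵥ r + 2 * t * a + t ^ 2 * bb := by
        simp [dotProduct_add, add_dotProduct, dotProduct_smul, smul_dotProduct,
          dotProduct_comm (A *ᵥ w) r, smul_eq_mul, ha, hbb]
        ring
      rw [expand] at h1; linarith
    by_contra hne
    have ht := key2 (-a / (bb + 1))
    have hpos : (0:ℝ) < bb + 1 := by linarith
    have : 2 * (-a / (bb + 1)) * a + (-a / (bb + 1)) ^ 2 * bb
        = (a ^ 2 / (bb + 1) ^ 2) * (bb - 2 * (bb + 1)) := by
      field_simp; ring
    rw [this] at ht
    have h3 : 0 < a ^ 2 / (bb + 1) ^ 2 := by positivity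
    nlinarith [mul_pos h3 (show (0:ℝ) < bb + 2 by linarith)]
  have : (Aᵀ *ᵥ r) ⬝ᵥ (Aᵀ *ᵥ r) = 0 := by
    calc (Aᵀ *ᵥ r) ⬝ᵥ (Aᵀ *ᵥ r) = (A *ᵥ (Aᵀ *ᵥ r)) ⬝ᵥ r := by
          rw [dotProduct_mulVec (Aᵀ *ᵥ r) Aᵀ r, vecMul_transpose]
      _ = 0 := key _
  rwa [dotProduct_self_eq_zero] at this

lemma enorm₂_neg {d : ℕ} (v : Fin d → ℝ) : enorm₂ (-v) = enorm₂ v := by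
  simp [enorm₂]

/-- Theorem 3.1 of the paper: with `B = Q₂ M Q₁ᵀ`, `x_k = B† c`, and
`P = Iₙ - Q₁Q₁ᵀ`, if `z` is the minimum-norm least squares solution of
`min_w ‖(LP)w - L x_k‖` (i.e. `z = (LP)† L x_k`, characterized by being a least
squares solution lying in the column space of `(LP)ᵀ`), then
`x_{L,k} = x_k - z` solves `min ‖Lx‖` subject to `x` being a least squares
solution of `‖Bx - c‖`. -/
theorem hybrid_lsmr_solution
    (n k p : ℕ) (hn : 0 < n) (hk : 0 < k) (hp : 0 < p)
    (Q₁ : Matrix (Fin n) (Fin k) ℝ) (Q₂ : Matrix (Fin n) (Fin (k + 1)) ℝ)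
    (M : Matrix (Fin (k + 1)) (Fin k) ℝ)
    (hQ₁ : Q₁ᵀ * Q₁ = 1) (hQ₂ : Q₂ᵀ * Q₂ = 1)
    (hM : IsUnit (Mᵀ * M)) (c : Fin n → ℝ)
    (L : Matrix (Fin p) (Fin n) ℝ) (z : Fin n → ℝ) :
    let B := Q₂ * M * Q₁ᵀ
    let xk := (Q₁ * (Mᵀ * M)⁻¹ * Mᵀ * Q₂ᵀ).mulVec c
    let P : Matrix (Fin n) (Fin n) ℝ := 1 - Q₁ * Q₁ᵀ
    (∀ w : Fin n → ℝ,
        enorm₂ ((L * P).mulVec z - L.mulVec xk) ≤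
          enorm₂ ((L * P).mulVec w - L.mulVec xk)) →
    (∃ u : Fin p → ℝ, z = (L * P)ᵀ.mulVec u) →
    ((∀ x : Fin n → ℝ,
        enorm₂ (B.mulVec (xk - z) - c) ≤ enorm₂ (B.mulVec x - c)) ∧
      ∀ x : Fin n → ℝ,
        (∀ w : Fin n → ℝ, enorm₂ (B.mulVec x - c) ≤ enorm₂ (B.mulVec w - c)) →
          enorm₂ (L.mulVec (xk - z)) ≤ enorm₂ (L.mulVec x)) := by
  intro B xk P h1 h2
  have hBdef : B = Q₂ * M * Q₁ᵀ := rfl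
  have hPdef : P = 1 - Q₁ * Q₁ᵀ := rfl
  -- cancellation helpers
  have hdet : IsUnit (Mᵀ * M).det := (Matrix.isUnit_iff_isUnit_det _).mp hM
  have hMM : (Mᵀ * M) * (Mᵀ * M)⁻¹ = 1 := Matrix.mul_nonsing_inv _ hdet
  have hMM' : (Mᵀ * M)⁻¹ * (Mᵀ * M) = 1 := Matrix.nonsing_inv_mul _ hdet
  have cancel₁ : ∀ (Y : Matrix (Fin k) (Fin n) ℝ), Q₁ᵀ * (Q₁ * Y) = Y := fun Y => by
    rw [← Matrix.mul_assoc, hQ₁, Matrix.one_mul]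
  have cancel₂ : ∀ (Y : Matrix (Fin (k + 1)) (Fin n) ℝ), Q₂ᵀ * (Q₂ * Y) = Y := fun Y => by
    rw [← Matrix.mul_assoc, hQ₂, Matrix.one_mul]
  have cancelN : ∀ (Y : Matrix (Fin k) (Fin n) ℝ),
      Mᵀ * (M * ((Mᵀ * M)⁻¹ * Y)) = Y := fun Y => by
    rw [← Matrix.mul_assoc, ← Matrix.mul_assoc, hMM, Matrix.one_mul]
  -- P is an orthogonal projector annihilated by B
  have hSS : (Q₁ * Q₁ᵀ) * (Q₁ * Q₁ᵀ) = Q₁ * Q₁ᵀ := by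
    rw [Matrix.mul_assoc, ← Matrix.mul_assoc Q₁ᵀ Q₁ Q₁ᵀ, hQ₁, Matrix.one_mul]
  have hPP : P * P = P := by
    rw [hPdef, Matrix.sub_mul, Matrix.one_mul, Matrix.mul_sub, Matrix.mul_one, hSS]
    abel
  have hPt : Pᵀ = P := by
    rw [hPdef, Matrix.transpose_sub, Matrix.transpose_one, Matrix.transpose_mul,
      Matrix.transpose_transpose]
  have hBP : B * P = 0 := by
    rw [hBdef, hPdef, Matrix.mul_sub, Matrix.mul_one]
    simp only [Matrix.mul_assoc]
    rw [← Matrix.mul_assoc Q₁ᵀ Q₁ Q₁ᵀ, hQ₁, Matrix.one_mul, sub_self]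
  obtain ⟨u, hzdef⟩ := h2
  have hz : z = P *ᵥ (Lᵀ *ᵥ u) := by
    rw [hzdef, Matrix.transpose_mul, hPt, ← mulVec_mulVec]
  have hPz : P *ᵥ z = z := by
    conv_lhs => rw [hz, mulVec_mulVec, mulVec_mulVec, hPP]
    rw [← mulVec_mulVec, ← hz]
  have hBz : B *ᵥ z = 0 := by
    rw [hz, mulVec_mulVec, mulVec_mulVec, hBP, Matrix.zero_mul, zero_mulVec]
  -- normal equations for xk
  have hmat : Bᵀ * B * (Q₁ * (Mᵀ * M)⁻¹ * Mᵀ * Q₂ᵀ) = Bᵀ := by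
    rw [hBdef]
    simp only [Matrix.transpose_mul, Matrix.transpose_transpose, Matrix.mul_assoc]
    rw [cancel₁, cancel₂, cancelN]
  have hnormal : Bᵀ *ᵥ (B *ᵥ xk - c) = 0 := by
    show Bᵀ *ᵥ (B *ᵥ ((Q₁ * (Mᵀ * M)⁻¹ * Mᵀ * Q₂ᵀ) *ᵥ c) - c) = 0
    rw [mulVec_sub, mulVec_mulVec, mulVec_mulVec, hmat, sub_self]
  have hreseq : B *ᵥ (xk - z) - c = B *ᵥ xk - c := by
    rw [mulVec_sub, hBz, sub_zero]
  constructor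
  · intro x
    rw [hreseq]
    exact ls_of_normal B c xk hnormal x
  · intro x hx
    have hnx : Bᵀ *ᵥ (B *ᵥ x - c) = 0 := normal_of_ls B c x hx
    -- Bᵀ B (x - xk) = 0
    have e1 : (Bᵀ * B) *ᵥ x = Bᵀ *ᵥ (B *ᵥ x) := (mulVec_mulVec x Bᵀ B).symm
    have e2 : (Bᵀ * B) *ᵥ xk = Bᵀ *ᵥ (B *ᵥ xk) := (mulVec_mulVec xk Bᵀ B).symm
    have h5 : (Bᵀ * B) *ᵥ (x - xk) = 0 := by
      rw [mulVec_sub, e1, e2]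
      rw [mulVec_sub, sub_eq_zero] at hnx hnormal
      rw [hnx, hnormal, sub_self]
    have hBtB : Bᵀ * B = Q₁ * (Mᵀ * M) * Q₁ᵀ := by
      rw [hBdef]
      simp only [Matrix.transpose_mul, Matrix.transpose_transpose, Matrix.mul_assoc]
      rw [cancel₂]
    have hQv : Q₁ᵀ *ᵥ (x - xk) = 0 := by
      have h6 : ((Mᵀ * M)⁻¹ * (Q₁ᵀ * (Q₁ * (Mᵀ * M) * Q₁ᵀ))) *ᵥ (x - xk) = 0 := by
        rw [← mulVec_mulVec, ← mulVec_mulVec, ← hBtB, h5, mulVec_zero, mulVec_zero]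
      rw [Matrix.mul_assoc Q₁ (Mᵀ * M) Q₁ᵀ, cancel₁ ((Mᵀ * M) * Q₁ᵀ),
        ← Matrix.mul_assoc, hMM', Matrix.one_mul] at h6
      exact h6
    have hPv : P *ᵥ (x - xk) = x - xk := by
      rw [hPdef, Matrix.sub_mulVec, Matrix.one_mulVec, ← mulVec_mulVec, hQv,
        mulVec_zero, sub_zero]
    -- inner normal equations
    have hr : (L * P)ᵀ *ᵥ ((L * P) *ᵥ z - L *ᵥ xk) = 0 := by
      have := normal_of_ls (L * P) (L *ᵥ xk) z ?_
      · exact this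
      · intro y
        have := h1 y
        simpa using this
    set r : Fin p → ℝ := (L * P) *ᵥ z - L *ᵥ xk with hrdef
    have hLz : L *ᵥ z = (L * P) *ᵥ z := by
      conv_lhs => rw [← hPz, mulVec_mulVec]
    have hLPv : (L * P) *ᵥ (x - xk) = L *ᵥ (x - xk) := by
      rw [← mulVec_mulVec, hPv]
    have hLxkz : L *ᵥ (xk - z) = -r := by
      rw [mulVec_sub, hLz, hrdef, neg_sub]
    have hLx : L *ᵥ x = -r + (L * P) *ᵥ (z + (x - xk)) := by
      rw [mulVec_add, hLPv, mulVec_sub, hrdef, ← hLz]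
      abel
    rw [hLxkz, hLx]
    apply pyth
    rw [dotProduct_comm, dotProduct_mulVec (-r) (L * P) (z + (x - xk)),
      ← mulVec_transpose, Matrix.mulVec_neg, hr, neg_zero, zero_dotProduct]
end

section
/- (Theorem 3.2) Let n, k, p be positive integers with 2 ≤ k ≤ n − 2 and p ≥ n − k, let L ∈ ℝ^{p×n}, let W ∈ ℝ^{n×(n−k)}, and let W' ∈ ℝ^{n×(n−k−1)} be obtained from W by deleting one column. Define, for a matrix B, σ_max(B) = sSup{‖Bx‖ : ‖x‖ = 1} and σ_min(B) = sInf{‖Bx‖ : ‖x‖ = 1}. Assume σ_min(L W) > 0. Then σ_max(L W)/σ_min(L W) ≥ σ_max(L W')/σ_min(L W'); that is, κ(L Q_k^⊥) ≥ κ(L Q_{k+1}^⊥), so the condition number of the inner least squares coefficient matrix is non-increasing in k. -/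
open Matrix

/-- Euclidean 2-norm of a vector in `ℝ^d`. -/
noncomputable def vecEnorm {d : ℕ} (v : Fin d → ℝ) : ℝ := Real.sqrt (∑ i, v i ^ 2)

/-- The largest singular value `σ_max(B) = sup_{‖x‖=1} ‖Bx‖`. -/
noncomputable def sigmaMax {p q : ℕ} (B : Matrix (Fin p) (Fin q) ℝ) : ℝ :=
  sSup {r : ℝ | ∃ x : Fin q → ℝ, vecEnorm x = 1 ∧ r = vecEnorm (B.mulVec x)}

/-- The smallest singular value `σ_min(B) = inf_{‖x‖=1} ‖Bx‖`. -/
noncomputable def sigmaMin {p q : ℕ} (B : Matrix (Fin p) (Fin q) ℝ) : ℝ :=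
  sInf {r : ℝ | ∃ x : Fin q → ℝ, vecEnorm x = 1 ∧ r = vecEnorm (B.mulVec x)}

lemma sum_extend_aux {a b : ℕ} (f : Fin a → Fin b) (hf : Function.Injective f)
    (x' : Fin a → ℝ) (g : Fin b → ℝ → ℝ) (hg : ∀ m, g m 0 = 0) :
    ∑ m, g m (Function.extend f x' 0 m) = ∑ j, g (f j) (x' j) := by
  have h1 : ∑ m, g m (Function.extend f x' 0 m)
      = ∑ m ∈ Finset.image f Finset.univ, g m (Function.extend f x' 0 m) := by
    refine (Finset.sum_subset (Finset.subset_univ _) ?_).symm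
    intro m _ hm
    have : ¬ ∃ j, f j = m := by simpa [Finset.mem_image] using hm
    rw [Function.extend_apply' _ _ _ this]; exact hg m
  rw [h1, Finset.sum_image (fun i _ j _ h => hf h)]
  exact Finset.sum_congr rfl (fun j _ => by rw [hf.extend_apply])

def sset {p q : ℕ} (B : Matrix (Fin p) (Fin q) ℝ) : Set ℝ :=
  {r : ℝ | ∃ x : Fin q → ℝ, vecEnorm x = 1 ∧ r = vecEnorm (B.mulVec x)}

lemma sset_subset {p q q' : ℕ} (B : Matrix (Fin p) (Fin q) ℝ)
    (f : Fin q' → Fin q) (hf : Function.Injective f) :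
    sset (B.submatrix id f) ⊆ sset B := by
  rintro r ⟨x', hx', rfl⟩
  refine ⟨Function.extend f x' 0, ?_, ?_⟩
  · unfold vecEnorm at *
    rw [sum_extend_aux f hf x' (fun _ t => t ^ 2) (by simp)]; exact hx'
  · congr 1
    ext i
    simp only [mulVec, dotProduct, submatrix_apply, id_eq]
    exact (sum_extend_aux f hf x' (fun m t => B i m * t) (by simp)).symm

lemma sset_nonneg {p q : ℕ} (B : Matrix (Fin p) (Fin q) ℝ) :
    ∀ r ∈ sset B, 0 ≤ r := by
  rintro r ⟨x, hx, rfl⟩; exact Real.sqrt_nonneg _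

lemma sset_nonempty {p q : ℕ} (B : Matrix (Fin p) (Fin q) ℝ) (hq : 0 < q) :
    (sset B).Nonempty := by
  refine ⟨_, fun m => if m = ⟨0, hq⟩ then 1 else 0, ?_, rfl⟩
  unfold vecEnorm
  rw [Finset.sum_eq_single ⟨0, hq⟩]
  · simp
  · intro m _ hm; simp [hm]
  · simp

lemma abs_le_one_of_enorm {q : ℕ} (x : Fin q → ℝ) (hx : vecEnorm x = 1) (j : Fin q) :
    |x j| ≤ 1 := by
  have hs : ∑ i, x i ^ 2 = 1 := by
    have := congrArg (fun t => t ^ 2) hx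
    simpa [vecEnorm, Real.sq_sqrt (Finset.sum_nonneg fun i _ => sq_nonneg (x i))] using this
  have h1 : x j ^ 2 ≤ 1 := by
    rw [← hs]
    exact Finset.single_le_sum (fun i _ => sq_nonneg (x i)) (Finset.mem_univ j)
  nlinarith [abs_nonneg (x j), sq_abs (x j)]

lemma sset_bddAbove {p q : ℕ} (B : Matrix (Fin p) (Fin q) ℝ) :
    BddAbove (sset B) := by
  refine ⟨Real.sqrt (∑ i, (∑ j, |B i j|) ^ 2), ?_⟩
  rintro r ⟨x, hx, rfl⟩
  apply Real.sqrt_le_sqrt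
  apply Finset.sum_le_sum
  intro i _
  have h1 : |B.mulVec x i| ≤ ∑ j, |B i j| := by
    have : B.mulVec x i = ∑ j, B i j * x j := by simp [mulVec, dotProduct]
    rw [this]
    refine (Finset.abs_sum_le_sum_abs _ _).trans ?_
    apply Finset.sum_le_sum
    intro j _
    rw [abs_mul]
    calc |B i j| * |x j| ≤ |B i j| * 1 :=
          mul_le_mul_of_nonneg_left (abs_le_one_of_enorm x hx j) (abs_nonneg _)
      _ = |B i j| := mul_one _
  calc B.mulVec x i ^ 2 = |B.mulVec x i| ^ 2 := (sq_abs _).symm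
    _ ≤ (∑ j, |B i j|) ^ 2 := by
        exact pow_le_pow_left₀ (abs_nonneg _) h1 2

/-- Theorem 3.2: if `W'` is obtained from `W` by deleting one column and
`σ_min(LW) > 0`, then `κ(LW') = σ_max(LW')/σ_min(LW') ≤ σ_max(LW)/σ_min(LW) = κ(LW)`:
the condition number of the inner least squares coefficient matrix is
non-increasing in `k`. -/
theorem condition_number_nonincreasing
    (n k p : ℕ) (hn : 0 < n) (hk2 : 2 ≤ k) (hkn : k ≤ n - 2) (hp : n - k ≤ p)
    (L : Matrix (Fin p) (Fin n) ℝ)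
    (W : Matrix (Fin n) (Fin (n - k)) ℝ) (W' : Matrix (Fin n) (Fin (n - k - 1)) ℝ)
    (f : Fin (n - k - 1) → Fin (n - k)) (hf : Function.Injective f)
    (hW' : W' = W.submatrix id f)
    (hmin : 0 < sigmaMin (L * W)) :
    sigmaMax (L * W') / sigmaMin (L * W') ≤ sigmaMax (L * W) / sigmaMin (L * W) := by
  have hq' : 0 < n - k - 1 := by omega
  have hLW' : L * W' = (L * W).submatrix id f := by
    rw [hW']
    ext i j
    simp [Matrix.mul_apply, Matrix.submatrix_apply]
  have hsub : sset (L * W') ⊆ sset (L * W) := by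
    rw [hLW']; exact sset_subset (L * W) f hf
  have hne' : (sset (L * W')).Nonempty := sset_nonempty _ hq'
  have hne : (sset (L * W)).Nonempty := hne'.mono hsub
  have hbdd : BddAbove (sset (L * W)) := sset_bddAbove _
  have hbddb : BddBelow (sset (L * W)) := ⟨0, fun r hr => sset_nonneg _ r hr⟩
  have hmax : sigmaMax (L * W') ≤ sigmaMax (L * W) :=
    csSup_le_csSup hbdd hne' hsub
  have hminle : sigmaMin (L * W) ≤ sigmaMin (L * W') :=
    csInf_le_csInf hbddb hne' hsub
  have hmaxnn : 0 ≤ sigmaMax (L * W) := by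
    obtain ⟨r, hr⟩ := hne
    exact (sset_nonneg _ r hr).trans (le_csSup hbdd hr)
  exact div_le_div₀ hmaxnn hmax hmin hminle
end

section
/- Let m, n, k be positive integers, let A ∈ ℝ^{m×n}, let P ∈ ℝ^{m×(k+1)} and Q ∈ ℝ^{n×(k+1)} have orthonormal columns (PᵀP = I_{k+1}, QᵀQ = I_{k+1}), let Q_k ∈ ℝ^{n×k} be the matrix of the first k columns of Q and q_{k+1} ∈ ℝⁿ the last column of Q, let B_k ∈ ℝ^{(k+1)×k}, and let α_{k+1}, β_{k+1} ∈ ℝ. Assume the Golub–Kahan relations: A Q_k = P B_k, Aᵀ P = Q_k B_kᵀ + α_{k+1} q_{k+1} (e_{k+1})ᵀ, and (e_{k+1})ᵀ B_k = β_{k+1} (e_k)ᵀ (the last row of B_k is β_{k+1} times the k-th standard basis row vector). Then Qᵀ Aᵀ A Q_k equals the (k+1)×k matrix whose first k rows are B_kᵀ B_k and whose last row is α_{k+1} β_{k+1} (e_k)ᵀ. -/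
open Matrix

/-- Equation (2.9) of the paper: under the Golub–Kahan bidiagonalization
relations `A Q_k = P B_k`, `Aᵀ P = Q_k B_kᵀ + α_{k+1} q_{k+1} e_{k+1}ᵀ`, and
`e_{k+1}ᵀ B_k = β_{k+1} e_kᵀ`, the projection `Qᵀ Aᵀ A Q_k` is the
`(k+1) × k` matrix whose first `k` rows are `B_kᵀ B_k` and whose last row is
`α_{k+1} β_{k+1} e_kᵀ`. -/
theorem golub_kahan_projected_normal_operator
    (m n k : ℕ) (hm : 0 < m) (hn : 0 < n) (hk : 0 < k)
    (A : Matrix (Fin m) (Fin n) ℝ)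
    (P : Matrix (Fin m) (Fin (k + 1)) ℝ) (Q : Matrix (Fin n) (Fin (k + 1)) ℝ)
    (Bk : Matrix (Fin (k + 1)) (Fin k) ℝ) (α β : ℝ)
    (hP : Pᵀ * P = 1) (hQ : Qᵀ * Q = 1)
    (Qk : Matrix (Fin n) (Fin k) ℝ)
    (hQk : Qk = Q.submatrix id Fin.castSucc)
    (qlast : Fin n → ℝ) (hqlast : qlast = fun i => Q i (Fin.last k))
    (h1 : A * Qk = P * Bk)
    (h2 : Aᵀ * P = Qk * Bkᵀ + α • Matrix.vecMulVec qlast (Pi.single (Fin.last k) 1))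
    (h3 : ∀ j : Fin k, Bk (Fin.last k) j = if (j : ℕ) = k - 1 then β else 0) :
    Qᵀ * Aᵀ * A * Qk =
      Matrix.of (fun (i : Fin (k + 1)) (j : Fin k) =>
        if hi : (i : ℕ) < k then (Bkᵀ * Bk) ⟨(i : ℕ), hi⟩ j
        else α * β * (if (j : ℕ) = k - 1 then 1 else 0)) := by
  have hQQk : Qᵀ * Qk =
      Matrix.of (fun (i : Fin (k+1)) (j : Fin k) => if i = j.castSucc then (1:ℝ) else 0) := by
    ext i j
    have : (Qᵀ * Qk) i j = (Qᵀ * Q) i j.castSucc := by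
      simp [hQk, mul_apply, submatrix]
    rw [this, hQ]
    simp [Matrix.one_apply]
  have hQq : Qᵀ *ᵥ qlast = Pi.single (Fin.last k) 1 := by
    funext i
    have : (Qᵀ *ᵥ qlast) i = (Qᵀ * Q) i (Fin.last k) := by
      simp [hqlast, mulVec, dotProduct, mul_apply]
    rw [this, hQ]
    simp [Matrix.one_apply, Pi.single_apply]
  set v : Fin (k+1) → ℝ := Pi.single (Fin.last k) 1 with hv
  have hc : ∀ a : Fin (k+1), ∑ x, Q x a * qlast x = v a := by
    intro a
    have := congrFun hQq a
    simpa [mulVec, dotProduct, transpose_apply] using this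
  have hQV : Qᵀ * Matrix.vecMulVec qlast v = Matrix.vecMulVec v v := by
    ext i j
    have h1' : (Qᵀ * Matrix.vecMulVec qlast v) i j = (∑ x, Q x i * qlast x) * v j := by
      simp [mul_apply, vecMulVec_apply, Finset.sum_mul, mul_assoc]
    rw [h1', hc i, vecMulVec_apply]
  have e1 : Qᵀ * Aᵀ * A * Qk = Qᵀ * (Aᵀ * P) * Bk := by
    rw [Matrix.mul_assoc (Qᵀ * Aᵀ) A Qk, h1, ← Matrix.mul_assoc (Qᵀ * Aᵀ) P Bk,
      Matrix.mul_assoc Qᵀ Aᵀ P]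
  have key : Qᵀ * Aᵀ * A * Qk =
      (Qᵀ * Qk) * (Bkᵀ * Bk) + α • (Matrix.vecMulVec v v * Bk) := by
    rw [e1, h2, Matrix.mul_add, Matrix.mul_smul, Matrix.add_mul, Matrix.smul_mul, hQV]
    simp only [Matrix.mul_assoc]
  rw [key, hQQk]
  ext i j
  have hB : (α • (Matrix.vecMulVec v v * Bk)) i j =
      (if i = Fin.last k then α * Bk (Fin.last k) j else 0) := by
    have hs : ∑ x, v x * Bk x j = Bk (Fin.last k) j := by
      have := congrFun (Matrix.single_one_vecMul (Fin.last k) Bk) j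
      simpa [vecMul, dotProduct] using this
    rw [Matrix.smul_apply, Matrix.mul_apply]
    simp only [vecMulVec_apply, mul_assoc, ← Finset.mul_sum]
    rw [hs, hv, Pi.single_apply]
    split <;> simp
  have hA : ((Matrix.of fun (a : Fin (k+1)) (b : Fin k) =>
        if a = b.castSucc then (1:ℝ) else 0) * (Bkᵀ * Bk)) i j
      = (if hi : (i : ℕ) < k then (Bkᵀ * Bk) ⟨(i : ℕ), hi⟩ j else 0) := by
    rw [Matrix.mul_apply]
    by_cases hlt : (i : ℕ) < k
    · rw [dif_pos hlt, Finset.sum_eq_single ⟨(i : ℕ), hlt⟩]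
      · simp [Fin.ext_iff]
      · intro x _ hx
        rw [Matrix.of_apply, if_neg, zero_mul]
        intro h
        exact hx (by simp [Fin.ext_iff] at h ⊢; omega)
      · simp
    · rw [dif_neg hlt]
      apply Finset.sum_eq_zero
      intro x _
      rw [Matrix.of_apply, if_neg, zero_mul]
      intro h
      exact hlt (by rw [h]; simpa using x.isLt)
  rw [Matrix.add_apply, hA, hB, Matrix.of_apply]
  by_cases hlt : (i : ℕ) < k
  · rw [dif_pos hlt, dif_pos hlt, if_neg, add_zero]
    intro h
    rw [h] at hlt
    simp at hlt
  · have hil : i = Fin.last k := Fin.ext (by have := i.isLt; simp [Fin.val_last]; omega)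
    rw [dif_neg hlt, dif_neg hlt, if_pos hil, zero_add, h3 j]
    split <;> ring
end

section
/- Let m, n, k be positive integers, let A ∈ ℝ^{m×n}, let P ∈ ℝ^{m×(k+1)} and Q ∈ ℝ^{n×(k+1)} have orthonormal columns (PᵀP = I_{k+1}, QᵀQ = I_{k+1}), let Q_k ∈ ℝ^{n×k} be the first k columns of Q, q₁ ∈ ℝⁿ the first column of Q, q_{k+1} ∈ ℝⁿ the last column of Q, p₁ ∈ ℝ^m the first column of P, let B_k ∈ ℝ^{(k+1)×k}, and let α₁, β₁, α_{k+1}, β_{k+1} ∈ ℝ. Assume: A Q_k = P B_k; Aᵀ P = Q_k B_kᵀ + α_{k+1} q_{k+1} (e_{k+1})ᵀ; (e_{k+1})ᵀ B_k = β_{k+1} (e_k)ᵀ; b = β₁ p₁; and Aᵀ p₁ = α₁ q₁. Let C ∈ ℝ^{(k+1)×k} be the matrix whose first k rows are B_kᵀB_k and whose last row is α_{k+1} β_{k+1} (e_k)ᵀ. Then for every y ∈ ℝ^k, ‖Aᵀ(b − A Q_k y)‖ = ‖α₁ β₁ e₁ − C y‖. Consequently, y minimizes ‖C y − α₁β₁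 e₁‖ over ℝ^k if and only if x = Q_k y minimizes ‖Aᵀ(b − Ax)‖ over the column space of Q_k. -/
open Matrix

/-- Euclidean 2-norm of a vector in `ℝ^d`. -/
noncomputable def enorm {d : ℕ} (v : Fin d → ℝ) : ℝ := Real.sqrt (∑ i, v i ^ 2)

private lemma enorm_orth {d e : ℕ} (Q : Matrix (Fin d) (Fin e) ℝ) (hQ : Qᵀ * Q = 1)
    (w : Fin e → ℝ) : _root_.enorm (Q.mulVec w) = _root_.enorm w := by
  unfold _root_.enorm
  congr 1
  have h1 : ∑ i, (Q.mulVec w) i ^ 2 = (Q.mulVec w) ⬝ᵥ (Q.mulVec w) := by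
    simp [dotProduct, sq]
  have h2 : ∑ i, w i ^ 2 = w ⬝ᵥ w := by simp [dotProduct, sq]
  rw [h1, h2, Matrix.dotProduct_mulVec, ← Matrix.mulVec_transpose,
    Matrix.mulVec_mulVec, hQ, Matrix.one_mulVec]

private lemma enorm_sub_comm {d : ℕ} (u v : Fin d → ℝ) : _root_.enorm (u - v) = _root_.enorm (v - u) := by
  unfold _root_.enorm
  congr 1
  apply Finset.sum_congr rfl
  intro i _
  simp only [Pi.sub_apply]
  ring

/-- The equivalence between the LSMR subproblem (2.6) and the projected residual
minimization (2.5): under the Golub–Kahan relations with `b = β₁ p₁` and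
`Aᵀ p₁ = α₁ q₁`, for every `y` one has
`‖Aᵀ(b − A Q_k y)‖ = ‖α₁β₁ e₁ − C y‖`, where `C` has first `k` rows `B_kᵀB_k`
and last row `α_{k+1} β_{k+1} e_kᵀ`; consequently `y` minimizes
`‖C y − α₁β₁ e₁‖` iff `x = Q_k y` minimizes `‖Aᵀ(b − A x)‖` over the column
space of `Q_k`. -/
theorem lsmr_subproblem_equivalence
    (m n k : ℕ) (hm : 0 < m) (hn : 0 < n) (hk : 0 < k)
    (A : Matrix (Fin m) (Fin n) ℝ) (b : Fin m → ℝ)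
    (P : Matrix (Fin m) (Fin (k + 1)) ℝ) (Q : Matrix (Fin n) (Fin (k + 1)) ℝ)
    (Bk : Matrix (Fin (k + 1)) (Fin k) ℝ) (α₁ β₁ α β : ℝ)
    (hP : Pᵀ * P = 1) (hQ : Qᵀ * Q = 1)
    (Qk : Matrix (Fin n) (Fin k) ℝ)
    (hQk : Qk = Q.submatrix id Fin.castSucc)
    (q₁ : Fin n → ℝ) (hq₁ : q₁ = fun i => Q i 0)
    (qlast : Fin n → ℝ) (hqlast : qlast = fun i => Q i (Fin.last k))
    (p₁ : Fin m → ℝ) (hp₁ : p₁ = fun i => P i 0)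
    (h1 : A * Qk = P * Bk)
    (h2 : Aᵀ * P = Qk * Bkᵀ + α • Matrix.vecMulVec qlast (Pi.single (Fin.last k) 1))
    (h3 : ∀ j : Fin k, Bk (Fin.last k) j = if (j : ℕ) = k - 1 then β else 0)
    (hb : b = β₁ • p₁)
    (hAp₁ : Aᵀ.mulVec p₁ = α₁ • q₁)
    (C : Matrix (Fin (k + 1)) (Fin k) ℝ)
    (hC : C = Matrix.of (fun (i : Fin (k + 1)) (j : Fin k) =>
        if hi : (i : ℕ) < k then (Bkᵀ * Bk) ⟨(i : ℕ), hi⟩ j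
        else α * β * (if (j : ℕ) = k - 1 then 1 else 0))) :
    (∀ y : Fin k → ℝ,
      _root_.enorm (Aᵀ.mulVec (b - A.mulVec (Qk.mulVec y))) =
        _root_.enorm ((α₁ * β₁) • (Pi.single 0 1 : Fin (k + 1) → ℝ) - C.mulVec y)) ∧
    (∀ y : Fin k → ℝ,
      (∀ y' : Fin k → ℝ,
          _root_.enorm (C.mulVec y - (α₁ * β₁) • (Pi.single 0 1 : Fin (k + 1) → ℝ)) ≤
            _root_.enorm (C.mulVec y' - (α₁ * β₁) • (Pi.single 0 1 : Fin (k + 1) → ℝ))) ↔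
        ∀ x : Fin n → ℝ, (∃ y' : Fin k → ℝ, x = Qk.mulVec y') →
          _root_.enorm (Aᵀ.mulVec (b - A.mulVec (Qk.mulVec y))) ≤
            _root_.enorm (Aᵀ.mulVec (b - A.mulVec x))) := by
  have key : ∀ y : Fin k → ℝ,
      Aᵀ.mulVec (b - A.mulVec (Qk.mulVec y)) =
        Q.mulVec ((α₁ * β₁) • (Pi.single 0 1 : Fin (k + 1) → ℝ) - C.mulVec y) := by
    intro y
    set j₀ : Fin k := ⟨k - 1, by omega⟩ with hj₀
    -- LHS computation
    have hAQ : A.mulVec (Qk.mulVec y) = P.mulVec (Bk.mulVec y) := by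
      rw [Matrix.mulVec_mulVec, h1, ← Matrix.mulVec_mulVec]
    have hBlast : (Bk.mulVec y) (Fin.last k) = β * y j₀ := by
      simp only [Matrix.mulVec, dotProduct, h3]
      rw [Finset.sum_eq_single j₀]
      · simp [hj₀]
      · intro b _ hb
        have : ¬ ((b : ℕ) = k - 1) := by
          intro h; apply hb; ext; simp [h, hj₀]
        simp [this]
      · simp
    have hvm : (Matrix.vecMulVec qlast (Pi.single (Fin.last k) 1)).mulVec (Bk.mulVec y)
        = (β * y j₀) • qlast := by
      funext i
      simp only [Matrix.mulVec, Matrix.vecMulVec_apply, dotProduct, Pi.smul_apply, smul_eq_mul]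
      rw [Finset.sum_eq_single (Fin.last k)]
      · have h := hBlast
        simp only [Matrix.mulVec, dotProduct] at h
        simp [h]; ring
      · intro b _ hb; simp [Pi.single_eq_of_ne hb]
      · simp
    have hL : Aᵀ.mulVec (b - A.mulVec (Qk.mulVec y)) =
        (α₁ * β₁) • q₁ - ((Qk * (Bkᵀ * Bk)).mulVec y + (α * (β * y j₀)) • qlast) := by
      rw [hb, hAQ, Matrix.mulVec_sub, Matrix.mulVec_smul, hAp₁,
        Matrix.mulVec_mulVec, h2, Matrix.add_mulVec, Matrix.smul_mulVec, hvm,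
        ← Matrix.mulVec_mulVec, ← Matrix.mulVec_mulVec]
      rw [smul_smul, smul_smul, Matrix.mulVec_mulVec, Matrix.mulVec_mulVec,
        Matrix.mul_assoc, mul_comm β₁ α₁, ← Matrix.mulVec_mulVec]
    -- RHS computation
    have hQC : Q * C = Qk * (Bkᵀ * Bk) + α • Matrix.vecMulVec qlast (Pi.single j₀ (β : ℝ)) := by
      ext i j
      simp only [Matrix.mul_apply, hC, Matrix.of_apply, Matrix.add_apply, Matrix.smul_apply,
        Matrix.vecMulVec_apply, hQk, Matrix.submatrix_apply, id, hqlast, smul_eq_mul]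
      rw [Fin.sum_univ_castSucc]
      congr 1
      · apply Finset.sum_congr rfl
        intro c _
        have hc : ((Fin.castSucc c : Fin (k+1)) : ℕ) < k := c.isLt
        rw [dif_pos hc]
        congr 1
      · rw [dif_neg (by simp)]
        by_cases hj : (j : ℕ) = k - 1
        · have : j = j₀ := by ext; simp [hj, hj₀]
          rw [this, Pi.single_eq_same]; simp [hj₀]; ring
        · have : j ≠ j₀ := by intro h; apply hj; rw [h]
          simp [hj, Pi.single_eq_of_ne this]
    have hQe : Q.mulVec (Pi.single 0 1 : Fin (k + 1) → ℝ) = q₁ := by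
      rw [Matrix.mulVec_single, hq₁]; simp; rfl
    have hvm2 : (Matrix.vecMulVec qlast (Pi.single j₀ (β : ℝ))).mulVec y = (β * y j₀) • qlast := by
      funext i
      simp only [Matrix.mulVec, Matrix.vecMulVec_apply, dotProduct, Pi.smul_apply, smul_eq_mul]
      rw [Finset.sum_eq_single j₀]
      · simp; ring
      · intro b _ hb; simp [Pi.single_eq_of_ne hb]
      · simp
    rw [hL, Matrix.mulVec_sub, Matrix.mulVec_smul, hQe, Matrix.mulVec_mulVec, hQC,
      Matrix.add_mulVec, Matrix.smul_mulVec, hvm2, smul_smul]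
  have keyN : ∀ y : Fin k → ℝ,
      _root_.enorm (Aᵀ.mulVec (b - A.mulVec (Qk.mulVec y))) =
        _root_.enorm ((α₁ * β₁) • (Pi.single 0 1 : Fin (k + 1) → ℝ) - C.mulVec y) := by
    intro y
    rw [key y, enorm_orth Q hQ]
  refine ⟨keyN, ?_⟩
  have keyN' : ∀ y : Fin k → ℝ,
      _root_.enorm (Aᵀ.mulVec (b - A.mulVec (Qk.mulVec y))) =
        _root_.enorm (C.mulVec y - (α₁ * β₁) • (Pi.single 0 1 : Fin (k + 1) → ℝ)) := by
    intro y
    rw [keyN y, enorm_sub_comm]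
  intro y
  constructor
  · rintro h x ⟨y', rfl⟩
    rw [keyN' y, keyN' y']
    exact h y'
  · intro h y'
    rw [← keyN' y, ← keyN' y']
    exact h _ ⟨y', rfl⟩
end
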